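/- Let C ≥ 1 be an integer and let B̂ : ℝ → ℝ be the Laplace–Stieltjes transform of a probability distribution B on [0,∞), i.e. B̂(s) = ∫₀^∞ e^{-sx} dB(x). Fix μ > 0 and suppose the mean interarrival time a = ∫₀^∞ x dB(x) satisfies 1/(aμC) < 1 (i.e. aμC > 1) and B is not concentrated at 0. Then the equation z = B̂(μ - μ z^C) has exactly one root in the open interval (0,1). -/

import Mathlib

open MeasureTheory Set Filter Topology

lemma psi_hasDerivAt (C : ℕ) (μ x : ℝ) :
    HasDerivAt (fun z : ℝ => Real.exp (-(μ - μ * z ^ C) * x)) (μ * C * x) 1 := by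
  have hp : HasDerivAt (fun z : ℝ => z ^ C) ((C : ℝ) * (1:ℝ) ^ (C - 1)) 1 :=
    hasDerivAt_pow C 1
  have h0 := ((hp.const_mul μ).const_sub μ).neg.mul_const x
  have h0' : HasDerivAt (fun z : ℝ => -(μ - μ * z ^ C) * x) (μ * C * x) 1 := by
    exact h0.congr_deriv (by ring)
  have := h0'.exp
  convert this using 1
  simp

lemma integrable_exp_neg (B : Measure ℝ) [IsProbabilityMeasure B]
    (hae : ∀ᵐ x ∂B, 0 ≤ x) (c : ℝ) (hc : 0 ≤ c) :
    Integrable (fun x => Real.exp (-c * x)) B := by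
  refine (integrable_const (1:ℝ)).mono' ?_ ?_
  · exact (Real.continuous_exp.comp (continuous_const.mul continuous_id)).aestronglyMeasurable
  · filter_upwards [hae] with x hx
    rw [Real.norm_eq_abs, abs_of_pos (Real.exp_pos _)]
    have h1 : -c * x ≤ 0 := by nlinarith
    calc Real.exp (-c * x) ≤ Real.exp 0 := Real.exp_le_exp.2 h1
    _ = 1 := Real.exp_zero

lemma strict_ineq (C : ℕ) (hC : 1 ≤ C) (μ : ℝ) (hμ : 0 < μ)
    (z1 t : ℝ) (h1 : z1 ∈ Ioo (0:ℝ) 1) (ht : t ∈ Ioo (0:ℝ) 1)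
    (x : ℝ) (hx : 0 < x) :
    Real.exp (-(μ - μ * (t * z1 + (1 - t) * 1) ^ C) * x)
      < t * Real.exp (-(μ - μ * z1 ^ C) * x)
        + (1 - t) * Real.exp (-(μ - μ * (1:ℝ) ^ C) * x) := by
  set f : ℝ → ℝ := fun z => μ * x * z ^ C with hf
  have hconv : ConvexOn ℝ (Ici (0:ℝ)) f :=
    (convexOn_pow C).smul (mul_nonneg hμ.le hx.le)
  have hin : f (t * z1 + (1 - t) * 1) ≤ t * f z1 + (1 - t) * f 1 := by
    have h0 : f (t • z1 + (1 - t) • (1:ℝ)) ≤ t • f z1 + (1 - t) • f 1 :=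
      hconv.2 (mem_Ici.2 h1.1.le) (mem_Ici.2 zero_le_one) ht.1.le
        (by linarith [ht.2]) (by ring)
    simpa [smul_eq_mul] using h0
  have hlt : f z1 < f 1 := by
    have : z1 ^ C < 1 ^ C := by
      rw [one_pow]
      exact pow_lt_one₀ h1.1.le h1.2 (by omega)
    simp only [hf]
    nlinarith [mul_pos hμ hx]
  have step : Real.exp (t * (f z1 - μ * x) + (1 - t) * (f 1 - μ * x))
      < t * Real.exp (f z1 - μ * x) + (1 - t) * Real.exp (f 1 - μ * x) := by
    have h0 : Real.exp (t • (f z1 - μ * x) + (1 - t) • (f 1 - μ * x))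
        < t • Real.exp (f z1 - μ * x) + (1 - t) • Real.exp (f 1 - μ * x) :=
      strictConvexOn_exp.2 (mem_univ (f z1 - μ * x)) (mem_univ (f 1 - μ * x))
        (by intro h; exact absurd (by linarith : f z1 = f 1) hlt.ne) ht.1
        (by linarith [ht.2]) (by ring)
    simpa [smul_eq_mul] using h0
  have e1 : f z1 - μ * x = -(μ - μ * z1 ^ C) * x := by simp only [hf]; ring
  have e2 : f 1 - μ * x = -(μ - μ * (1:ℝ) ^ C) * x := by simp only [hf]; ring
  calc Real.exp (-(μ - μ * (t * z1 + (1 - t) * 1) ^ C) * x)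
      = Real.exp (f (t * z1 + (1 - t) * 1) - μ * x) := by congr 1; simp only [hf]; ring
    _ ≤ Real.exp (t * (f z1 - μ * x) + (1 - t) * (f 1 - μ * x)) := by
        apply Real.exp_le_exp.2
        have hr : t * (f z1 - μ * x) + (1 - t) * (f 1 - μ * x)
            = t * f z1 + (1 - t) * f 1 - μ * x := by ring
        linarith [hin]
    _ < _ := step
    _ = _ := by rw [e1, e2]

lemma phi_contOn (B : Measure ℝ) [IsProbabilityMeasure B] (hae : ∀ᵐ x ∂B, 0 ≤ x)
    (C : ℕ) (μ : ℝ) (hμ : 0 < μ) :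
    ContinuousOn (fun z => ∫ x, Real.exp (-(μ - μ * z ^ C) * x) ∂B) (Icc (0:ℝ) 1) := by
  rw [continuousOn_iff_continuous_restrict]
  show Continuous fun z : Icc (0:ℝ) 1 => ∫ x, Real.exp (-(μ - μ * (z:ℝ) ^ C) * x) ∂B
  apply continuous_of_dominated (bound := fun _ : ℝ => (1:ℝ))
  · intro z
    exact (Real.continuous_exp.comp (continuous_const.mul continuous_id)).aestronglyMeasurable
  · intro z
    filter_upwards [hae] with x hx
    rw [Real.norm_eq_abs, abs_of_pos (Real.exp_pos _)]
    have hzc : (z:ℝ) ^ C ≤ 1 := pow_le_one₀ z.2.1 z.2.2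
    have key := mul_nonneg (mul_nonneg hμ.le (sub_nonneg.2 hzc)) hx
    have h1 : -(μ - μ * (z:ℝ) ^ C) * x ≤ 0 := by nlinarith [key]
    calc Real.exp (-(μ - μ * (z:ℝ) ^ C) * x) ≤ Real.exp 0 := Real.exp_le_exp.2 h1
    _ = 1 := Real.exp_zero
  · exact integrable_const 1
  · refine Eventually.of_forall fun x => ?_
    fun_prop

/-- Uniqueness of the root in (0,1) of z = B̂(μ - μ z^C) for the GI/M^C/1 queue. -/
theorem gim_c_1_fixed_point_unique
    (C : ℕ) (hC : 1 ≤ C) (B : Measure ℝ) [IsProbabilityMeasure B]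
    (hsupp : B (Set.Iio 0) = 0) (μ : ℝ) (hμ : 0 < μ)
    (a : ℝ) (ha : a = ∫ x, x ∂B) (hstab : 1 < a * μ * C)
    (hnot0 : B {0} < 1) :
    ∃! z : ℝ, z ∈ Set.Ioo (0:ℝ) 1 ∧ z = ∫ x, Real.exp (-(μ - μ * z ^ C) * x) ∂B := by
  have hae : ∀ᵐ x ∂B, 0 ≤ x := by
    rw [ae_iff]
    have hset : {x : ℝ | ¬ 0 ≤ x} = Iio 0 := by ext x; simp [not_le]
    rw [hset]; exact hsupp
  set Φ : ℝ → ℝ := fun z => ∫ x, Real.exp (-(μ - μ * z ^ C) * x) ∂B with hΦdef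
  have hint : ∀ z ∈ Icc (0:ℝ) 1,
      Integrable (fun x => Real.exp (-(μ - μ * z ^ C) * x)) B := by
    intro z hz
    have hzc : z ^ C ≤ 1 := pow_le_one₀ hz.1 hz.2
    exact integrable_exp_neg B hae _ (by nlinarith [hμ.le])
  have hΦ1 : Φ 1 = 1 := by simp [hΦdef]
  have hΦ0 : 0 < Φ 0 := by
    rw [hΦdef]
    rw [integral_pos_iff_support_of_nonneg_ae
      (Eventually.of_forall fun x => (Real.exp_pos _).le)
      (hint 0 ⟨le_refl 0, zero_le_one⟩)]
    have hsup : Function.support (fun x : ℝ => Real.exp (-(μ - μ * (0:ℝ) ^ C) * x)) = univ := by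
      ext x; simp [Function.mem_support, (Real.exp_pos _).ne']
    rw [hsup, measure_univ]
    norm_num
  -- Existence of a point where Φ w < w
  have hw : ∃ w ∈ Ioo (0:ℝ) 1, Φ w < w := by
    by_contra hcon
    push_neg at hcon
    have hint_id : Integrable (fun x : ℝ => x) B := by
      by_contra h
      rw [integral_undef h] at ha
      rw [ha] at hstab; norm_num at hstab
    set u : ℕ → ℝ := fun n => 1 - (1/2:ℝ)^(n+1) with hu
    have hu_mem : ∀ n, u n ∈ Ioo (0:ℝ) 1 := by
      intro n
      have h2 : (0:ℝ) < (1/2:ℝ)^(n+1) := by positivity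
      have h3 : ((1:ℝ)/2)^(n+1) ≤ ((1:ℝ)/2)^1 :=
        pow_le_pow_of_le_one (by norm_num) (by norm_num) (by omega)
      constructor
      · simp only [hu]; norm_num at h3 ⊢; linarith
      · simp only [hu]; linarith
    have hu_tend : Tendsto u atTop (𝓝[≠] (1:ℝ)) := by
      apply tendsto_nhdsWithin_of_tendsto_nhds_of_eventually_within
      · have h1 : Tendsto (fun n : ℕ => ((1:ℝ)/2)^(n+1)) atTop (𝓝 0) :=
          (tendsto_pow_atTop_nhds_zero_of_lt_one (by norm_num) (by norm_num)).comp
            (tendsto_add_atTop_nat 1)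
        have h2 : Tendsto (fun n : ℕ => 1 - ((1:ℝ)/2)^(n+1)) atTop (𝓝 (1 - 0)) :=
          Tendsto.sub tendsto_const_nhds h1
        simpa only [sub_zero] using h2
      · exact Eventually.of_forall fun n => (hu_mem n).2.ne
    set g : ℕ → ℝ → ℝ :=
      fun n x => (1 - Real.exp (-(μ - μ * (u n) ^ C) * x)) / (1 - u n) with hg
    have hg_tend : ∀ x : ℝ, Tendsto (fun n => g n x) atTop (𝓝 (μ * C * x)) := by
      intro x
      have hs := hasDerivAt_iff_tendsto_slope.mp (psi_hasDerivAt C μ x)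
      have hcomp := hs.comp hu_tend
      apply hcomp.congr
      intro n
      simp only [Function.comp, slope_def_field, hg]
      have hψ1 : Real.exp (-(μ - μ * (1:ℝ) ^ C) * x) = 1 := by simp
      rw [hψ1]
      have hne1 : u n - 1 ≠ 0 := sub_ne_zero.2 (hu_mem n).2.ne
      have hne2 : (1:ℝ) - u n ≠ 0 := sub_ne_zero.2 (hu_mem n).2.ne'
      field_simp
      ring
    have hg_nonneg : ∀ n, 0 ≤ᵐ[B] g n := by
      intro n
      filter_upwards [hae] with x hx
      have hzc : (u n) ^ C ≤ 1 := pow_le_one₀ (hu_mem n).1.le (hu_mem n).2.le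
      have key := mul_nonneg (mul_nonneg hμ.le (sub_nonneg.2 hzc)) hx
      have h1 : -(μ - μ * (u n) ^ C) * x ≤ 0 := by nlinarith [key]
      have h2 : Real.exp (-(μ - μ * (u n) ^ C) * x) ≤ 1 := by
        calc Real.exp _ ≤ Real.exp 0 := Real.exp_le_exp.2 h1
        _ = 1 := Real.exp_zero
      have h3 : 0 < 1 - u n := by linarith [(hu_mem n).2]
      exact div_nonneg (by linarith) h3.le
    have hIg : ∀ n, Integrable (g n) B := fun n =>
      ((integrable_const 1).sub (hint (u n) ⟨(hu_mem n).1.le, (hu_mem n).2.le⟩)).div_const _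
    have hg_int_le : ∀ n, ∫ x, g n x ∂B ≤ 1 := by
      intro n
      have hden : 0 < 1 - u n := by linarith [(hu_mem n).2]
      have heq : ∫ x, g n x ∂B = (1 - Φ (u n)) / (1 - u n) := by
        simp only [hg]
        rw [integral_div, integral_sub (integrable_const 1)
          (hint (u n) ⟨(hu_mem n).1.le, (hu_mem n).2.le⟩)]
        simp [hΦdef]
      rw [heq, div_le_one hden]
      have := hcon (u n) (hu_mem n)
      linarith
    have hmeas : ∀ n, Measurable fun x => ENNReal.ofReal (g n x) := by
      intro n
      apply Measurable.ennreal_ofReal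
      have : Continuous (g n) := by fun_prop
      exact this.measurable
    have hliminf_eq : ∀ x : ℝ,
        liminf (fun n => ENNReal.ofReal (g n x)) atTop = ENNReal.ofReal (μ * C * x) :=
      fun x => ((ENNReal.continuous_ofReal.tendsto _).comp (hg_tend x)).liminf_eq
    have key : ENNReal.ofReal (μ * C * a) ≤ ENNReal.ofReal 1 := by
      calc ENNReal.ofReal (μ * C * a)
          = ∫⁻ x, ENNReal.ofReal (μ * C * x) ∂B := by
            rw [ha, ← integral_const_mul]
            exact ofReal_integral_eq_lintegral_ofReal (hint_id.const_mul _)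
              (by filter_upwards [hae] with x hx;
                  exact mul_nonneg (by positivity) hx)
        _ = ∫⁻ x, liminf (fun n => ENNReal.ofReal (g n x)) atTop ∂B :=
            lintegral_congr fun x => (hliminf_eq x).symm
        _ ≤ liminf (fun n => ∫⁻ x, ENNReal.ofReal (g n x) ∂B) atTop :=
            lintegral_liminf_le hmeas
        _ ≤ ENNReal.ofReal 1 := by
            have hb : ∀ n, ∫⁻ x, ENNReal.ofReal (g n x) ∂B ≤ ENNReal.ofReal 1 := by
              intro n
              rw [← ofReal_integral_eq_lintegral_ofReal (hIg n) (hg_nonneg n)]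
              exact ENNReal.ofReal_le_ofReal (hg_int_le n)
            calc liminf (fun n => ∫⁻ x, ENNReal.ofReal (g n x) ∂B) atTop
                ≤ liminf (fun _ : ℕ => ENNReal.ofReal 1) atTop :=
                  liminf_le_liminf (Eventually.of_forall hb)
              _ = ENNReal.ofReal 1 := liminf_const _
    have hle : μ * C * a ≤ 1 := (ENNReal.ofReal_le_ofReal_iff (by norm_num)).1 key
    nlinarith [hstab]
  obtain ⟨w, hw_mem, hw_lt⟩ := hw
  have hcont : ContinuousOn Φ (Icc 0 1) := phi_contOn B hae C μ hμ
  have hcont' : ContinuousOn (fun z => Φ z - z) (Icc 0 w) :=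
    (hcont.mono (Icc_subset_Icc le_rfl hw_mem.2.le)).sub continuousOn_id
  have hivt := intermediate_value_Icc' hw_mem.1.le hcont'
  have h0mem : (0:ℝ) ∈ Icc (Φ w - w) (Φ 0 - 0) := ⟨by linarith, by linarith⟩
  obtain ⟨r, hr_mem, hr_eq⟩ := hivt h0mem
  have hr_eq' : Φ r - r = 0 := hr_eq
  have hroot : r = Φ r := by linarith
  have hr0 : 0 < r := by
    rcases hr_mem.1.eq_or_lt with h | h
    · exfalso; rw [← h] at hroot; linarith
    · exact h
  have hr1 : r < 1 := lt_of_le_of_lt hr_mem.2 hw_mem.2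
  -- Uniqueness core: no two distinct roots
  have key2 : ∀ p q : ℝ, p ∈ Ioo (0:ℝ) 1 → q ∈ Ioo (0:ℝ) 1 →
      p = Φ p → q = Φ q → p < q → False := by
    intro p q hp hq hpe hqe hpq
    set t : ℝ := (1 - q) / (1 - p) with htdef
    have h1p : 0 < 1 - p := by linarith [hp.2]
    have ht : t ∈ Ioo (0:ℝ) 1 :=
      ⟨div_pos (by linarith [hq.2]) h1p, (div_lt_one h1p).2 (by linarith)⟩
    have hq_eq : q = t * p + (1 - t) * 1 := by
      have h2 : t * (1 - p) = 1 - q := by rw [htdef]; exact div_mul_cancel₀ _ h1p.ne'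
      linarith
    have hIp := hint p ⟨hp.1.le, hp.2.le⟩
    have hI1 := hint 1 ⟨zero_le_one, le_refl 1⟩
    have hIq := hint q ⟨hq.1.le, hq.2.le⟩
    set d : ℝ → ℝ := fun x =>
      t * Real.exp (-(μ - μ * p ^ C) * x)
        + (1 - t) * Real.exp (-(μ - μ * (1:ℝ) ^ C) * x)
        - Real.exp (-(μ - μ * q ^ C) * x) with hd
    have hd_pos : ∀ x : ℝ, 0 < x → 0 < d x := by
      intro x hx
      have hsi := strict_ineq C hC μ hμ p t hp ht x hx
      rw [← hq_eq] at hsi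
      simp only [hd]
      linarith
    have hd_nonneg : 0 ≤ᵐ[B] d := by
      filter_upwards [hae] with x hx
      rcases hx.eq_or_lt with h | h
      · rw [← h]
        simp only [hd, Pi.zero_apply, mul_zero, Real.exp_zero, mul_one]
        linarith
      · exact (hd_pos x h).le
    have hd_int : Integrable d B :=
      ((hIp.const_mul t).add (hI1.const_mul (1 - t))).sub hIq
    have hpos : 0 < ∫ x, d x ∂B := by
      rw [integral_pos_iff_support_of_nonneg_ae hd_nonneg hd_int]
      have hsub : Ioi (0:ℝ) ⊆ Function.support d := fun x hx => (hd_pos x hx).ne'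
      have hIic : B (Iic 0) = B {0} := by
        apply le_antisymm
        · calc B (Iic 0) = B (Iio 0 ∪ {0}) := by rw [Iio_union_right]
            _ ≤ B (Iio 0) + B {0} := measure_union_le _ _
            _ = B {0} := by rw [hsupp, zero_add]
        · exact measure_mono (by simp)
      have hIoi : 0 < B (Ioi 0) := by
        have hcompl : B (Ioi 0) = 1 - B {0} := by
          rw [← compl_Iic, measure_compl measurableSet_Iic (measure_ne_top B _),
            measure_univ, hIic]
        rw [hcompl]
        exact tsub_pos_of_lt hnot0
      exact lt_of_lt_of_le hIoi (measure_mono hsub)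
    have hsum : Integrable (fun x => t * Real.exp (-(μ - μ * p ^ C) * x)
        + (1 - t) * Real.exp (-(μ - μ * (1:ℝ) ^ C) * x)) B :=
      (hIp.const_mul t).add (hI1.const_mul (1 - t))
    have hval : ∫ x, d x ∂B = 0 := by
      simp only [hd]
      rw [integral_sub hsum hIq,
        integral_add (hIp.const_mul t) (hI1.const_mul (1 - t)),
        integral_const_mul, integral_const_mul]
      have e1 : ∫ x, Real.exp (-(μ - μ * p ^ C) * x) ∂B = p := hpe.symm
      have e2 : ∫ x, Real.exp (-(μ - μ * q ^ C) * x) ∂B = q := hqe.symm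
      have e3 : ∫ x, Real.exp (-(μ - μ * (1:ℝ) ^ C) * x) ∂B = 1 := hΦ1
      rw [e1, e2, e3, hq_eq]
      ring
    rw [hval] at hpos
    exact lt_irrefl 0 hpos
  refine ⟨r, ⟨⟨hr0, hr1⟩, hroot⟩, ?_⟩
  rintro y ⟨hy_mem, hy_eq⟩
  rcases lt_trichotomy y r with h | h | h
  · exact absurd (key2 y r hy_mem ⟨hr0, hr1⟩ hy_eq hroot h) not_false
  · exact h
  · exact absurd (key2 r y ⟨hr0, hr1⟩ hy_mem hroot hy_eq h) not_false
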